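/- Let m, n ≥ 1, let K be a finite field with 2^{2m} elements admitting a self-dual 𝔽₂-basis, and let C ⊆ C' ⊆ Kⁿ be K-linear codes with C^⊥ ⊆ C (dual with respect to Σᵢ xᵢyᵢ) and dim_K C' ≥ dim_K C + 1. Let d be the minimum Hamming weight of a nonzero codeword of C and d' that of C'. Set N = 2mn. Then there exists an 𝔽₂-subspace F ⊆ 𝔽₂^N × 𝔽₂^N such that: (i) F^ω ⊆ F, where F^ω is the dual of F with respect to the symplectic form ω((x,y),(x',y')) = Σⱼ (xⱼ y'ⱼ + x'ⱼ yⱼ); (ii) dim_{𝔽₂} F = 2m·(dim_K C + dim_K C'); and (iii) every nonzero (x,y) ∈ F satisfies 2·|supp(x) ∪ supp(y)| ≥ min(2d, 3d'). -/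

import Mathlib

set_option linter.unusedSectionVars false

section Aux

variable {m : ℕ} {K : Type*} [Field K] [Fintype K] [Algebra (ZMod 2) K]

private lemma tr_repr (α : Module.Basis (Fin (2 * m)) (ZMod 2) K)
    (hα : ∀ i j, Algebra.trace (ZMod 2) K (α i * α j) = if i = j then 1 else 0)
    (t : K) (i : Fin (2 * m)) :
    Algebra.trace (ZMod 2) K (t * α i) = α.repr t i := by
  calc Algebra.trace (ZMod 2) K (t * α i)
      = Algebra.trace (ZMod 2) K ((∑ j, α.repr t j • α j) * α i) := by
        rw [α.sum_repr t]
    _ = ∑ j, α.repr t j • Algebra.trace (ZMod 2) K (α j * α i) := by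
        rw [Finset.sum_mul, map_sum]
        exact Finset.sum_congr rfl fun j _ => by rw [smul_mul_assoc, map_smul]
    _ = α.repr t i := by
        simp [hα, smul_eq_mul, Finset.sum_ite_eq']

private lemma sum_tr_smul (α : Module.Basis (Fin (2 * m)) (ZMod 2) K)
    (hα : ∀ i j, Algebra.trace (ZMod 2) K (α i * α j) = if i = j then 1 else 0)
    (t : K) : ∑ j, Algebra.trace (ZMod 2) K (t * α j) • α j = t := by
  simp only [tr_repr α hα]
  exact α.sum_repr t

private lemma eq_zero_of_tr (α : Module.Basis (Fin (2 * m)) (ZMod 2) K)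
    (hα : ∀ i j, Algebra.trace (ZMod 2) K (α i * α j) = if i = j then 1 else 0)
    (t : K) (h : ∀ j, Algebra.trace (ZMod 2) K (t * α j) = 0) : t = 0 := by
  rw [← sum_tr_smul α hα t]
  simp [h]

private lemma tr_mul_eq (α : Module.Basis (Fin (2 * m)) (ZMod 2) K)
    (hα : ∀ i j, Algebra.trace (ZMod 2) K (α i * α j) = if i = j then 1 else 0)
    (a b : K) :
    ∑ j, Algebra.trace (ZMod 2) K (a * α j) * Algebra.trace (ZMod 2) K (b * α j)
      = Algebra.trace (ZMod 2) K (a * b) := by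
  conv_rhs => rw [← sum_tr_smul α hα b]
  rw [Finset.mul_sum, map_sum]
  exact Finset.sum_congr rfl fun j _ => by
    rw [mul_smul_comm, map_smul, smul_eq_mul, mul_comm]

end Aux

set_option maxHeartbeats 1000000 in
/-- Composite construction of Section 5: binary expansion in a self-dual
basis (Kasami–Lin) followed by Steane's construction. From a triple
`C' ⊇ C ⊇ C^⊥` of codes over a field `K` with `2^(2m)` elements one obtains
a large symplectic code `F ⊆ 𝔽₂^N × 𝔽₂^N`, `N = 2mn`, of dimension
`2m(dim C + dim C')` whose nonzero elements `(x,y)` satisfy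
`2·|supp x ∪ supp y| ≥ min(2d, 3d')`. -/
theorem composite_construction
    (m n : ℕ) (hm : 1 ≤ m) (hn : 1 ≤ n)
    (K : Type*) [Field K] [Fintype K] [Algebra (ZMod 2) K]
    (hcard : Fintype.card K = 2 ^ (2 * m))
    (hbasis : ∃ α : Module.Basis (Fin (2 * m)) (ZMod 2) K,
      ∀ i j, Algebra.trace (ZMod 2) K (α i * α j) = if i = j then 1 else 0)
    (C C' : Submodule K (Fin n → K)) (hCC' : C ≤ C')
    (hdual : ∀ x : Fin n → K, (∀ y ∈ C, ∑ i, x i * y i = 0) → x ∈ C)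
    (hdim : Module.finrank K C + 1 ≤ Module.finrank K C')
    (d d' : ℕ)
    (hd : d = sInf {w | ∃ x ∈ C, x ≠ (0 : Fin n → K) ∧
        w = {i | x i ≠ 0}.ncard})
    (hd' : d' = sInf {w | ∃ x ∈ C', x ≠ (0 : Fin n → K) ∧
        w = {i | x i ≠ 0}.ncard}) :
    ∃ F : Submodule (ZMod 2)
        ((Fin (2 * m * n) → ZMod 2) × (Fin (2 * m * n) → ZMod 2)),
      ({z : (Fin (2 * m * n) → ZMod 2) × (Fin (2 * m * n) → ZMod 2) |
          ∀ c ∈ F, ∑ j, (z.1 j * c.2 j + c.1 j * z.2 j) = 0} ⊆ (F : Set _)) ∧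
      Module.finrank (ZMod 2) F =
        2 * m * (Module.finrank K C + Module.finrank K C') ∧
      ∀ z ∈ F, z ≠ 0 →
        min (2 * d) (3 * d') ≤ 2 * ({j | z.1 j ≠ 0} ∪ {j | z.2 j ≠ 0}).ncard := by
  classical
  have hdle0 : ∀ c, c ∈ C → c ≠ 0 → d ≤ {i | c i ≠ 0}.ncard := by
    intro c hc hc0
    rw [hd]
    exact Nat.sInf_le ⟨c, hc, hc0, rfl⟩
  have hd'le0 : ∀ c, c ∈ C' → c ≠ 0 → d' ≤ {i | c i ≠ 0}.ncard := by
    intro c hc hc0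
    rw [hd']
    exact Nat.sInf_le ⟨c, hc, hc0, rfl⟩
  clear hd hd'
  obtain ⟨α, hα⟩ := hbasis
  -- the binary expansion map
  let φ : (Fin n → K) →ₗ[ZMod 2] (Fin (2 * m * n) → ZMod 2) :=
    { toFun := fun c p => Algebra.trace (ZMod 2) K
        (c (finProdFinEquiv.symm p).2 * α (finProdFinEquiv.symm p).1)
      map_add' := by
        intro a b; funext p
        simp [add_mul]
      map_smul' := by
        intro r c; funext p
        simp [smul_mul_assoc] }
  have hφdef : ∀ (c : Fin n → K) (p),
      φ c p = Algebra.trace (ZMod 2) K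
        (c (finProdFinEquiv.symm p).2 * α (finProdFinEquiv.symm p).1) :=
    fun c p => rfl
  have hφ0 : ∀ c, φ c = 0 → c = 0 := by
    intro c hc
    funext i
    show c i = 0
    apply eq_zero_of_tr α hα
    intro j
    have h := congrFun hc (finProdFinEquiv (j, i))
    rw [hφdef] at h
    simpa using h
  have hφinj : Function.Injective φ := by
    intro a b hab
    have h : φ (a - b) = 0 := by rw [map_sub, hab, sub_self]
    exact sub_eq_zero.mp (hφ0 _ h)
  have hcards : Fintype.card (Fin n → K)
      = Fintype.card (Fin (2 * m * n) → ZMod 2) := by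
    simp only [Fintype.card_fun, Fintype.card_fin, hcard, ZMod.card]
    rw [← pow_mul]
  have hφsurj : Function.Surjective φ :=
    ((Fintype.bijective_iff_injective_and_card φ).mpr ⟨hφinj, hcards⟩).2
  -- the bilinear identity
  have hbil : ∀ a b : Fin n → K,
      ∑ p, φ a p * φ b p = Algebra.trace (ZMod 2) K (∑ i, a i * b i) := by
    intro a b
    have h1 : ∑ p, φ a p * φ b p
        = ∑ q : Fin (2 * m) × Fin n, Algebra.trace (ZMod 2) K (a q.2 * α q.1) *
            Algebra.trace (ZMod 2) K (b q.2 * α q.1) := by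
      rw [← Equiv.sum_comp finProdFinEquiv (fun p => φ a p * φ b p)]
      refine Finset.sum_congr rfl fun q _ => ?_
      rw [hφdef, hφdef]
      simp
    rw [h1, Fintype.sum_prod_type_right, map_sum]
    exact Finset.sum_congr rfl fun i _ => tr_mul_eq α hα (a i) (b i)
  -- weights only grow under expansion
  have hwt : ∀ c : Fin n → K, {i | c i ≠ 0}.ncard ≤ {p | φ c p ≠ 0}.ncard := by
    intro c
    have hch : ∀ i, c i ≠ 0 → ∃ j, Algebra.trace (ZMod 2) K (c i * α j) ≠ 0 := by
      intro i hi
      by_contra h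
      push_neg at h
      exact hi (eq_zero_of_tr α hα _ h)
    haveI : Nonempty (Fin (2 * m)) := ⟨⟨0, by omega⟩⟩
    choose! jj hj using hch
    refine Set.ncard_le_ncard_of_injOn (fun i => finProdFinEquiv (jj i, i))
      ?_ ?_ (Set.toFinite _)
    · intro i hi
      simp only [Set.mem_setOf_eq] at hi ⊢
      rw [hφdef]
      simpa using hj i hi
    · intro i _ i' _ hii
      have h := congrArg (fun q => (finProdFinEquiv.symm q).2) hii
      simpa using h
  -- the binary weight identity
  have hkey : ∀ a b : ZMod 2,
      ((if a ≠ 0 then 1 else 0) + (if b ≠ 0 then 1 else 0)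
        + (if a + b ≠ 0 then 1 else 0) : ℕ)
      = 2 * (if a ≠ 0 ∨ b ≠ 0 then 1 else 0) := by decide
  have hsum : ∀ x y : Fin (2 * m * n) → ZMod 2,
      {p | x p ≠ 0}.ncard + {p | y p ≠ 0}.ncard + {p | (x + y) p ≠ 0}.ncard
      = 2 * ({p | x p ≠ 0} ∪ {p | y p ≠ 0}).ncard := by
    intro x y
    have hn' : ∀ (z : Fin (2 * m * n) → ZMod 2), {p | z p ≠ 0}.ncard
        = ∑ p, if z p ≠ 0 then 1 else 0 := by
      intro z
      rw [Set.ncard_eq_toFinset_card', Set.toFinset_setOf, Finset.card_filter]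
    have hu : ({p | x p ≠ 0} ∪ {p | y p ≠ 0}).ncard
        = ∑ p, if x p ≠ 0 ∨ y p ≠ 0 then 1 else 0 := by
      rw [← Set.setOf_or, Set.ncard_eq_toFinset_card', Set.toFinset_setOf,
        Finset.card_filter]
    rw [hn', hn', hn', hu, ← Finset.sum_add_distrib, ← Finset.sum_add_distrib,
      Finset.mul_sum]
    exact Finset.sum_congr rfl fun p _ => by
      simpa using hkey (x p) (y p)
  -- a scalar different from 0 and 1
  obtain ⟨lam, hlam0, hlam1⟩ : ∃ lam : K, lam ≠ 0 ∧ lam ≠ 1 := by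
    by_contra h
    push_neg at h
    have hsub : (Finset.univ : Finset K) ⊆ {0, 1} := by
      intro x _
      simp only [Finset.mem_insert, Finset.mem_singleton]
      rcases eq_or_ne x 0 with h0 | h0
      · exact Or.inl h0
      · exact Or.inr (h x h0)
    have hle := Finset.card_le_card hsub
    rw [Finset.card_univ] at hle
    have h2 : ({0, 1} : Finset K).card ≤ 2 :=
      le_trans (Finset.card_insert_le _ _) (by simp)
    have h2m : 2 ≤ 2 * m := by omega
    have hcge : (2:ℕ) ^ 2 ≤ 2 ^ (2 * m) := Nat.pow_le_pow_right (by norm_num) h2m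
    rw [hcard] at hle
    omega
  have hchar : (1 : K) + 1 = 0 := by
    have h := map_add (algebraMap (ZMod 2) K) 1 1
    have h2 : ((1 : ZMod 2) + 1) = 0 := by decide
    rw [h2, map_zero, map_one] at h
    exact h.symm
  have hlam2 : (1 : K) + lam ≠ 0 := by
    intro h
    exact hlam1 (by linear_combination h - hchar)
  -- the complement D of C inside C'
  obtain ⟨D₀, hD₀⟩ := Submodule.exists_isCompl (C.comap C'.subtype)
  set D : Submodule K (Fin n → K) := D₀.map C'.subtype with hDdef
  have hDC' : D ≤ C' := by
    rintro x ⟨x₀, _, rfl⟩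
    exact x₀.2
  have hDC : ∀ x ∈ D, x ∈ C → x = 0 := by
    rintro x ⟨x₀, hx₀, rfl⟩ hxC
    have hmem : x₀ ∈ C.comap C'.subtype ⊓ D₀ := ⟨hxC, hx₀⟩
    rw [hD₀.inf_eq_bot] at hmem
    rw [Submodule.mem_bot] at hmem
    simp [hmem]
  have hDrank : Module.finrank K C + Module.finrank K D = Module.finrank K C' := by
    have h1 := Submodule.finrank_add_eq_of_isCompl hD₀
    have h2 : Module.finrank K (C.comap C'.subtype) = Module.finrank K C := by
      rw [← Submodule.finrank_map_subtype_eq C' (C.comap C'.subtype),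
        Submodule.map_comap_subtype, inf_eq_right.mpr hCC']
    have h3 : Module.finrank K D = Module.finrank K D₀ :=
      Submodule.finrank_map_subtype_eq C' D₀
    rw [h3, ← h2, h1]
  -- the Steane-twist linear map
  let Θ : (↥C × ↥C × ↥D) →ₗ[ZMod 2]
      ((Fin (2 * m * n) → ZMod 2) × (Fin (2 * m * n) → ZMod 2)) :=
    { toFun := fun t => (φ ((t.1 : Fin n → K) + (t.2.2 : Fin n → K)),
        φ ((t.2.1 : Fin n → K) + lam • (t.2.2 : Fin n → K)))
      map_add' := by
        rintro ⟨u, v, x⟩ ⟨u', v', x'⟩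
        refine Prod.ext_iff.mpr ⟨?_, ?_⟩ <;>
          simp only [Prod.fst_add, Prod.snd_add, Submodule.coe_add, Pi.add_apply]
        · rw [← map_add]
          congr 1
          rw [add_add_add_comm]
        · rw [← map_add]
          congr 1
          rw [smul_add, add_add_add_comm]
      map_smul' := by
        rintro r ⟨u, v, x⟩
        refine Prod.ext_iff.mpr ⟨?_, ?_⟩ <;>
          simp only [Prod.smul_fst, Prod.smul_snd, SetLike.val_smul_of_tower,
            RingHom.id_apply]
        · rw [← smul_add, map_smul]
        · rw [smul_comm lam r, ← smul_add, map_smul] }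
  have hΘdef : ∀ t : ↥C × ↥C × ↥D,
      Θ t = (φ ((t.1 : Fin n → K) + (t.2.2 : Fin n → K)),
        φ ((t.2.1 : Fin n → K) + lam • (t.2.2 : Fin n → K))) := fun t => rfl
  refine ⟨LinearMap.range Θ, ?_, ?_, ?_⟩
  · -- dual containment
    intro z hz
    simp only [Set.mem_setOf_eq] at hz
    obtain ⟨c₁, hc₁⟩ := hφsurj z.1
    obtain ⟨c₂, hc₂⟩ := hφsurj z.2
    have hnd : ∀ cz : Fin n → K,
        (∀ y' ∈ C, Algebra.trace (ZMod 2) K (∑ i, cz i * y' i) = 0) → cz ∈ C := by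
      intro cz hkey'
      apply hdual
      intro y hy
      apply eq_zero_of_tr α hα
      intro j
      have h := hkey' (α j • y) (C.smul_mem (α j) hy)
      have heq : (∑ i, cz i * y i) * α j = ∑ i, cz i * (α j • y) i := by
        rw [Finset.sum_mul]
        exact Finset.sum_congr rfl fun i _ => by
          simp only [Pi.smul_apply, smul_eq_mul]; ring
      rw [heq]
      exact h
    have hz1C : c₁ ∈ C := by
      apply hnd
      intro y' hy'
      have hmem : ((0 : Fin (2 * m * n) → ZMod 2), φ y') ∈ LinearMap.range Θ := by
        refine ⟨(0, ⟨y', hy'⟩, 0), ?_⟩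
        rw [hΘdef]
        simp
      have h := hz _ hmem
      simp only [Pi.zero_apply, mul_zero, zero_mul, add_zero, zero_add] at h
      rw [← hbil, hc₁]
      simpa using h
    have hz2C : c₂ ∈ C := by
      apply hnd
      intro y' hy'
      have hmem : (φ y', (0 : Fin (2 * m * n) → ZMod 2)) ∈ LinearMap.range Θ := by
        refine ⟨(⟨y', hy'⟩, 0, 0), ?_⟩
        rw [hΘdef]
        simp
      have h := hz _ hmem
      simp only [Pi.zero_apply, mul_zero, zero_mul, add_zero, zero_add] at h
      rw [← hbil, hc₂, ← h]
      exact Finset.sum_congr rfl fun p _ => mul_comm _ _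
    refine ⟨(⟨c₁, hz1C⟩, ⟨c₂, hz2C⟩, 0), ?_⟩
    rw [hΘdef]
    simp [hc₁, hc₂]
  · -- dimension
    have hΘ0 : ∀ t, Θ t = 0 → t = 0 := by
      rintro ⟨u, v, x⟩ ht
      rw [hΘdef] at ht
      have h1 : φ ((u : Fin n → K) + x) = 0 := congrArg Prod.fst ht
      have h2 : φ ((v : Fin n → K) + lam • (x : Fin n → K)) = 0 :=
        congrArg Prod.snd ht
      have e1 : (u : Fin n → K) + x = 0 := hφ0 _ h1
      have hxC : (x : Fin n → K) ∈ C := by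
        have hx : (x : Fin n → K) = -(u : Fin n → K) :=
          eq_neg_of_add_eq_zero_left (by rw [add_comm]; exact e1)
        rw [hx]
        exact C.neg_mem u.2
      have hx0 : (x : Fin n → K) = 0 := hDC _ x.2 hxC
      have hu0 : (u : Fin n → K) = 0 := by rw [hx0, add_zero] at e1; exact e1
      have e2 : (v : Fin n → K) + lam • (x : Fin n → K) = 0 := hφ0 _ h2
      have hv0 : (v : Fin n → K) = 0 := by
        rw [hx0, smul_zero, add_zero] at e2; exact e2
      refine Prod.ext_iff.mpr ⟨?_, Prod.ext_iff.mpr ⟨?_, ?_⟩⟩ <;>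
        exact ZeroMemClass.coe_eq_zero.mp (by assumption)
    have hΘinj : Function.Injective Θ := by
      refine LinearMap.ker_eq_bot.mp ((Submodule.eq_bot_iff _).mpr ?_)
      intro t ht
      exact hΘ0 t (LinearMap.mem_ker.mp ht)
    haveI : Module.Finite (ZMod 2) K := Module.Finite.of_basis α
    haveI : Module.Finite (ZMod 2) ↥C := Module.Finite.trans K ↥C
    haveI : Module.Finite (ZMod 2) ↥D := Module.Finite.trans K ↥D
    have hK2 : Module.finrank (ZMod 2) K = 2 * m := by
      rw [Module.finrank_eq_card_basis α, Fintype.card_fin]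
    have hC2 : Module.finrank (ZMod 2) ↥C = 2 * m * Module.finrank K ↥C := by
      rw [← Module.finrank_mul_finrank (ZMod 2) K ↥C, hK2]
    have hD2 : Module.finrank (ZMod 2) ↥D = 2 * m * Module.finrank K ↥D := by
      rw [← Module.finrank_mul_finrank (ZMod 2) K ↥D, hK2]
    rw [LinearMap.finrank_range_of_inj hΘinj, Module.finrank_prod,
      Module.finrank_prod, hC2, hD2, ← hDrank]
    ring
  · -- minimum distance
    intro z hzF hz0
    obtain ⟨⟨u, v, x⟩, rfl⟩ := hzF
    set a : Fin n → K := (u : Fin n → K) + x with ha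
    set b : Fin n → K := (v : Fin n → K) + lam • (x : Fin n → K) with hb
    have hzeq : Θ (u, v, x) = (φ a, φ b) := rfl
    rw [hzeq] at hz0 ⊢
    have hmain := hsum (φ a) (φ b)
    have hab : φ a + φ b = φ (a + b) := (map_add φ a b).symm
    rw [hab] at hmain
    have hdle : ∀ c, c ∈ C → c ≠ 0 → d ≤ {p | φ c p ≠ 0}.ncard :=
      fun c hc hc0 => le_trans (hdle0 c hc hc0) (hwt c)
    have hd'le : ∀ c, c ∈ C' → c ≠ 0 → d' ≤ {p | φ c p ≠ 0}.ncard :=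
      fun c hc hc0 => le_trans (hd'le0 c hc hc0) (hwt c)
    by_cases hx : (x : Fin n → K) = 0
    · -- untwisted part: everything lies in C
      have haC : a ∈ C := by rw [ha, hx, add_zero]; exact u.2
      have hbC : b ∈ C := by rw [hb, hx, smul_zero, add_zero]; exact v.2
      have habne : a ≠ 0 ∨ b ≠ 0 := by
        by_contra h
        push_neg at h
        exact hz0 (by rw [h.1, h.2, map_zero]; rfl)
      refine le_trans (min_le_left _ _) ?_
      rw [← hmain]
      by_cases ha0 : a = 0
      · have hb0 : b ≠ 0 := by
          rcases habne with h | h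
          · exact absurd ha0 h
          · exact h
        have hab0 : a + b ≠ 0 := by rw [ha0, zero_add]; exact hb0
        have w2 := hdle b hbC hb0
        have w3 := hdle (a + b) (C.add_mem haC hbC) hab0
        omega
      · by_cases hb0 : b = 0
        · have hab0 : a + b ≠ 0 := by rw [hb0, add_zero]; exact ha0
          have w1 := hdle a haC ha0
          have w3 := hdle (a + b) (C.add_mem haC hbC) hab0
          omega
        · have w1 := hdle a haC ha0
          have w2 := hdle b hbC hb0
          omega
    · -- twisted part: everything lies in C' \ C
      have hnotC : ∀ w : K, w ≠ 0 → ∀ c ∈ C, c + w • (x : Fin n → K) ∉ C := by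
        intro w hw c hc hmem
        have hwx : w • (x : Fin n → K) ∈ C := by
          have h := C.sub_mem hmem hc
          simpa using h
        have hxm : w • (x : Fin n → K) ∈ D := D.smul_mem w x.2
        have h0 := hDC _ hxm hwx
        rcases smul_eq_zero.mp h0 with h | h
        · exact hw h
        · exact hx h
      have haC' : a ∈ C' := C'.add_mem (hCC' u.2) (hDC' x.2)
      have haN : a ∉ C := by
        have h := hnotC 1 one_ne_zero (u : Fin n → K) u.2
        rw [one_smul] at h
        exact h
      have ha0 : a ≠ 0 := fun h => haN (h ▸ C.zero_mem)
      have hbC' : b ∈ C' := C'.add_mem (hCC' v.2) (hDC' (D.smul_mem lam x.2))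
      have hbN : b ∉ C := hnotC lam hlam0 (v : Fin n → K) v.2
      have hb0 : b ≠ 0 := fun h => hbN (h ▸ C.zero_mem)
      have habeq : a + b = ((u : Fin n → K) + v) + (1 + lam) • (x : Fin n → K) := by
        rw [ha, hb, add_smul, one_smul]
        abel
      have habN : a + b ∉ C := by
        rw [habeq]
        exact hnotC (1 + lam) hlam2 _ (C.add_mem u.2 v.2)
      have habC' : a + b ∈ C' := C'.add_mem haC' hbC'
      have hab0 : a + b ≠ 0 := fun h => habN (h ▸ C.zero_mem)
      refine le_trans (min_le_right _ _) ?_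
      rw [← hmain]
      have w1 := hd'le a haC' ha0
      have w2 := hd'le b hbC' hb0
      have w3 := hd'le (a + b) habC' hab0
      omega
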